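/- Consider the Lotka–Volterra system on ℝ^d: w_i' = w_i(w_{i+1} − w_1 − w_i) for 1 ≤ i ≤ d−1, and w_d' = w_d(1 − w_1 − w_d). Any maximal solution with initial condition in the open positive orthant (0,∞)^d remains in (0,∞)^d, is bounded (each coordinate by max(w_1(0),...,w_d(0),1)), and is global (defined on all of ℝ₊). -/

import Mathlib

open Set Filter
open scoped ENNReal Topology

/-- positivity, boundedness and globality of maximal solutions of
the Lotka–Volterra system with initial condition in the open positive orthant. -/
theorem stmt_15 (d : ℕ) (hd : 0 < d)
    (F : (Fin d → ℝ) → Fin d → ℝ)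
    (hF : ∀ v i, F v i =
      if h : (i : ℕ) + 1 < d then v i * (v ⟨(i : ℕ) + 1, h⟩ - v ⟨0, hd⟩ - v i)
      else v i * (1 - v ⟨0, hd⟩ - v i))
    (τ : ℝ≥0∞) (hτ : 0 < τ) (w : ℝ → Fin d → ℝ)
    (hode : ∀ t : ℝ, 0 ≤ t → ENNReal.ofReal t < τ → ∀ i,
      HasDerivWithinAt (fun s => w s i) (F (w t) i) (Ici (0 : ℝ)) t)
    (hinit : ∀ i, 0 < w 0 i)
    (hmax : ∀ (τ' : ℝ≥0∞) (z : ℝ → Fin d → ℝ), τ < τ' →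
      (∀ t : ℝ, 0 ≤ t → ENNReal.ofReal t < τ' → ∀ i,
        HasDerivWithinAt (fun s => z s i) (F (z t) i) (Ici (0 : ℝ)) t) →
      (∀ t : ℝ, 0 ≤ t → ENNReal.ofReal t < τ → z t = w t) → False) :
    (∀ t : ℝ, 0 ≤ t → ENNReal.ofReal t < τ → ∀ i,
      0 < w t i ∧ w t i ≤ max 1 (⨆ j, w 0 j)) ∧ τ = ⊤ := by
  set M : ℝ := max 1 (⨆ j, w 0 j) with hMdef
  have hM1 : (1 : ℝ) ≤ M := le_max_left _ _
  have hM0 : (0 : ℝ) < M := lt_of_lt_of_le one_pos hM1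
  have hMinit : ∀ j, w 0 j ≤ M :=
    fun j => le_trans (le_ciSup (Set.Finite.bddAbove (finite_range _)) j) (le_max_right _ _)
  -- monotonicity helper
  have hmem : ∀ x t : ℝ, 0 ≤ x → x ≤ t → ENNReal.ofReal t < τ → ENNReal.ofReal x < τ := by
    intro x t hx hxt ht
    exact lt_of_le_of_lt (ENNReal.ofReal_le_ofReal hxt) ht
  have h0τ : ENNReal.ofReal 0 < τ := by simpa using hτ
  -- interior derivative
  have hD : ∀ x : ℝ, 0 < x → ENNReal.ofReal x < τ → ∀ i,
      HasDerivAt (fun s => w s i) (F (w x) i) x := by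
    intro x hx hxτ i
    exact (hode x hx.le hxτ i).hasDerivAt (Ici_mem_nhds hx)
  -- continuity on [0, t]
  have hcont : ∀ t : ℝ, 0 ≤ t → ENNReal.ofReal t < τ → ∀ i,
      ContinuousOn (fun s => w s i) (Icc 0 t) := by
    intro t ht0 htτ i x hx
    rcases eq_or_lt_of_le hx.1 with h0 | h0
    · subst h0
      exact (hode 0 le_rfl h0τ i).continuousWithinAt.mono (fun y hy => (mem_Icc.1 hy).1)
    · exact ((hD x h0 (hmem x t hx.1 hx.2 htτ) i).continuousAt).continuousWithinAt
  -- positivity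
  have hpos : ∀ t : ℝ, 0 ≤ t → ENNReal.ofReal t < τ → ∀ i, 0 < w t i := by
    intro t ht0 htτ i
    by_contra hle
    push_neg at hle
    -- the set of times in [0,t] where w · i is nonpositive
    set S : Set ℝ := Icc 0 t ∩ (fun s => w s i) ⁻¹' Iic 0 with hSdef
    have hSclosed : IsClosed S :=
      (hcont t ht0 htτ i).preimage_isClosed_of_isClosed isClosed_Icc isClosed_Iic
    have hSne : S.Nonempty := ⟨t, ⟨ht0, le_rfl⟩, hle⟩
    have hSbdd : BddBelow S := ⟨0, fun s hs => hs.1.1⟩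
    set c : ℝ := sInf S with hcdef
    have hcS : c ∈ S := hSclosed.csInf_mem hSne hSbdd
    have hc0 : 0 < c := by
      rcases eq_or_lt_of_le hcS.1.1 with h | h
      · exfalso; have := hcS.2; rw [← h] at this
        exact absurd (hinit i) (not_lt.2 this)
      · exact h
    have hct : c ≤ t := hcS.1.2
    have hcτ : ENNReal.ofReal c < τ := hmem c t hc0.le hct htτ
    -- before c, w · i is positive
    have hbefore : ∀ s ∈ Ico (0:ℝ) c, 0 < w s i := by
      intro s hs
      by_contra hns
      push_neg at hns
      have : s ∈ S := ⟨⟨hs.1, hs.2.le.trans hct⟩, hns⟩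
      exact absurd (csInf_le hSbdd this) (not_le.2 hs.2)
    -- w c i = 0
    have hc_eq : w c i = 0 := by
      refine le_antisymm hcS.2 ?_
      have hne : (𝓝[Ico (0:ℝ) c] c).NeBot := by
        rw [← mem_closure_iff_nhdsWithin_neBot, closure_Ico hc0.ne]
        exact ⟨hc0.le, le_rfl⟩
      have htd : Tendsto (fun s => w s i) (𝓝[Ico (0:ℝ) c] c) (𝓝 (w c i)) :=
        ((hcont t ht0 htτ i c ⟨hc0.le, hct⟩).mono
          (fun y hy => ⟨hy.1, hy.2.le.trans hct⟩)).tendsto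
      exact ge_of_tendsto htd (eventually_nhdsWithin_of_forall
        (fun s hs => (hbefore s hs).le))
    -- bound the coefficient on [0, c]
    obtain ⟨K, hK⟩ : ∃ K : ℝ, ∀ x ∈ Icc (0:ℝ) c,
        ‖(if h : (i : ℕ) + 1 < d then w x ⟨(i : ℕ) + 1, h⟩ else 1) - w x ⟨0, hd⟩ - w x i‖ ≤ K := by
      apply isCompact_Icc.exists_bound_of_continuousOn
      have hbase : ∀ j : Fin d, ContinuousOn (fun x => w x j) (Icc (0:ℝ) c) :=
        fun j => (hcont t ht0 htτ j).mono (Icc_subset_Icc_right hct)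
      by_cases h : (i : ℕ) + 1 < d
      · simp only [dif_pos h]
        exact ((hbase ⟨(i:ℕ)+1, h⟩).sub (hbase ⟨0, hd⟩)).sub (hbase i)
      · simp only [dif_neg h]
        exact ((continuousOn_const.sub (hbase ⟨0, hd⟩))).sub (hbase i)
    -- Gronwall on the time-reversed function
    have key : ∀ x ∈ Icc (0:ℝ) c, ‖w (c - x) i‖ ≤ gronwallBound 0 K 0 (x - 0) := by
      apply norm_le_gronwallBound_of_norm_deriv_right_le
        (f' := fun x => F (w (c - x)) i * (-1))
      · -- continuity
        have : ContinuousOn (fun s => w s i) (Icc 0 c) :=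
          (hcont t ht0 htτ i).mono (Icc_subset_Icc_right hct)
        apply this.comp (continuous_const.sub continuous_id).continuousOn
        intro x hx
        exact ⟨by simp; linarith [hx.2], by simp; linarith [hx.1]⟩
      · -- derivative
        intro x hx
        have hx' : 0 < c - x := by linarith [hx.2]
        have hDa : HasDerivAt (fun s => w s i) (F (w (c - x)) i) (c - x) :=
          hD (c - x) hx' (hmem _ c hx'.le (by linarith [hx.1]) hcτ) i
        have hinner : HasDerivAt (fun s : ℝ => c - s) (-1) x := by
          simpa using (hasDerivAt_id x).const_sub c
        exact (hDa.comp x hinner).hasDerivWithinAt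
      · simp [hc_eq]
      · -- the bound
        intro x hx
        have hmemIcc : c - x ∈ Icc (0:ℝ) c := ⟨by linarith [hx.2], by linarith [hx.1]⟩
        have hFx : F (w (c - x)) i = w (c - x) i *
            ((if h : (i : ℕ) + 1 < d then w (c-x) ⟨(i : ℕ) + 1, h⟩ else 1)
              - w (c-x) ⟨0, hd⟩ - w (c-x) i) := by
          rw [hF]; split <;> ring
        rw [hFx]
        have := hK (c - x) hmemIcc
        calc ‖w (c-x) i * _ * (-1)‖
            = ‖w (c-x) i‖ * ‖(if h : (i : ℕ) + 1 < d then w (c-x) ⟨(i : ℕ) + 1, h⟩ else 1)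
              - w (c-x) ⟨0, hd⟩ - w (c-x) i‖ := by
              rw [mul_neg_one, norm_neg, norm_mul]
          _ ≤ ‖w (c-x) i‖ * K := by
              apply mul_le_mul_of_nonneg_left this (norm_nonneg _)
          _ ≤ K * ‖w (c-x) i‖ + 0 := by rw [add_zero, mul_comm]
    have := key c ⟨hc0.le, le_rfl⟩
    rw [gronwallBound_ε0_δ0, sub_self] at this
    have h0' : 0 < w 0 i := hinit i
    rw [Real.norm_eq_abs, abs_le] at this
    linarith [this.2]
  -- boundedness
  have key : ∀ (i : Fin d) (t : ℝ), 0 ≤ t → ENNReal.ofReal t < τ →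
      (∀ x, 0 ≤ x → x < t →
        (if h : (i : ℕ) + 1 < d then w x ⟨(i : ℕ) + 1, h⟩ else 1) ≤ M) → w t i ≤ M := by
    intro i t ht0 htτ hnext
    refine image_le_of_deriv_right_lt_deriv_boundary (f := fun s => w s i)
      (f' := fun x => F (w x) i) (B := fun _ => M) (B' := fun _ => 0) (a := 0) (b := t)
      (hcont t ht0 htτ i)
      (fun x hx => ((hode x hx.1 (hmem x t hx.1 hx.2.le htτ) i).mono
        (fun y hy => le_trans hx.1 hy)))
      (hMinit i) (fun x => hasDerivAt_const x M) ?_ ⟨ht0, le_rfl⟩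
    intro x hx hxM
    have hw0 : 0 < w x ⟨0, hd⟩ := hpos x hx.1 (hmem x t hx.1 hx.2.le htτ) ⟨0, hd⟩
    have hc : (if h : (i : ℕ) + 1 < d then w x ⟨(i : ℕ) + 1, h⟩ else 1) ≤ M :=
      hnext x hx.1 hx.2
    have hxM' : w x i = M := hxM
    show F (w x) i < 0
    rw [hF]
    split
    case isTrue h =>
      rw [dif_pos h] at hc
      nlinarith [hxM', hM0]
    case isFalse h =>
      rw [dif_neg h] at hc
      nlinarith [hxM', hM0]
  have hbdd : ∀ t : ℝ, 0 ≤ t → ENNReal.ofReal t < τ → ∀ i, w t i ≤ M := by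
    have main : ∀ n : ℕ, ∀ i : Fin d, d ≤ (i : ℕ) + 1 + n →
        ∀ t : ℝ, 0 ≤ t → ENNReal.ofReal t < τ → w t i ≤ M := by
      intro n
      induction n with
      | zero =>
        intro i hi t ht0 htτ
        refine key i t ht0 htτ (fun x hx0 hxt => ?_)
        rw [dif_neg (by omega)]
        exact hM1
      | succ n ih =>
        intro i hi t ht0 htτ
        refine key i t ht0 htτ (fun x hx0 hxt => ?_)
        by_cases h : (i : ℕ) + 1 < d
        · rw [dif_pos h]
          exact ih ⟨(i : ℕ) + 1, h⟩ (by simp; omega) x hx0 (hmem x t hx0 hxt.le htτ)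
        · rw [dif_neg h]
          exact hM1
    intro t ht0 htτ i
    exact main d i (by omega) t ht0 htτ
  refine ⟨fun t ht0 htτ i => ⟨hpos t ht0 htτ i, hbdd t ht0 htτ i⟩, ?_⟩
  by_contra htop
  set T : ℝ := τ.toReal with hTdef
  have hTpos : 0 < T := ENNReal.toReal_pos hτ.ne' htop
  have hτT : τ = ENNReal.ofReal T := (ENNReal.ofReal_toReal htop).symm
  have hsub : ∀ s : ℝ, 0 ≤ s → s < T → ENNReal.ofReal s < τ := by
    intro s h0 h1; rw [hτT]; exact (ENNReal.ofReal_lt_ofReal_iff hTpos).2 h1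
  -- F is C¹ and continuous
  have hFeq : F = fun (v : Fin d → ℝ) (i : Fin d) => if h : (i : ℕ) + 1 < d then
      v i * (v ⟨(i : ℕ) + 1, h⟩ - v ⟨0, hd⟩ - v i) else v i * (1 - v ⟨0, hd⟩ - v i) := by
    funext v i; exact hF v i
  have hFcd : ContDiff ℝ 1 F := by
    rw [hFeq]
    apply contDiff_pi.2
    intro i
    by_cases h : (i : ℕ) + 1 < d
    · simp only [dif_pos h]
      exact (contDiff_apply ℝ ℝ i).mul (((contDiff_apply ℝ ℝ ⟨(i:ℕ)+1,h⟩).sub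
        (contDiff_apply ℝ ℝ ⟨0,hd⟩)).sub (contDiff_apply ℝ ℝ i))
    · simp only [dif_neg h]
      exact (contDiff_apply ℝ ℝ i).mul ((contDiff_const.sub
        (contDiff_apply ℝ ℝ ⟨0,hd⟩)).sub (contDiff_apply ℝ ℝ i))
  have hFc : Continuous F := hFcd.continuous
  have hFci : ∀ i : Fin d, Continuous (fun v => F v i) :=
    fun i => (continuous_apply i).comp hFc
  -- continuity of w on [0, T)
  have hcontIco : ∀ i : Fin d, ContinuousOn (fun s => w s i) (Ico 0 T) := by
    intro i x hx
    rcases eq_or_lt_of_le hx.1 with h0 | h0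
    · subst h0
      exact (hode 0 le_rfl h0τ i).continuousWithinAt.mono (fun y hy => hy.1)
    · exact (hD x h0 (hsub x h0.le hx.2) i).continuousAt.continuousWithinAt
  have hwcont : ContinuousOn w (Ico 0 T) := continuousOn_pi.2 hcontIco
  have hgcont : ∀ i : Fin d, ContinuousOn (fun s => F (w s) i) (Ico 0 T) :=
    fun i => (hFci i).comp_continuousOn hwcont
  have hgbdd : ∀ i : Fin d, ∀ s ∈ Ico (0:ℝ) T, ‖F (w s) i‖ ≤ 3 * M ^ 2 := by
    intro i s hs
    have hsτ := hsub s hs.1 hs.2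
    have h0i := hpos s hs.1 hsτ i
    have hMi := hbdd s hs.1 hsτ i
    have h00 := hpos s hs.1 hsτ ⟨0, hd⟩
    have hM00 := hbdd s hs.1 hsτ ⟨0, hd⟩
    rw [hF, Real.norm_eq_abs, abs_le]
    split
    case isTrue h =>
      have h0n := hpos s hs.1 hsτ ⟨(i:ℕ)+1, h⟩
      have hMn := hbdd s hs.1 hsτ ⟨(i:ℕ)+1, h⟩
      constructor <;> nlinarith
    case isFalse h =>
      constructor <;> nlinarith [hM1]
  have hint : ∀ i : Fin d,
      MeasureTheory.IntegrableOn (fun s => F (w s) i) (Icc 0 T) MeasureTheory.volume := by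
    intro i
    have hfin : MeasureTheory.IsFiniteMeasure
        (MeasureTheory.volume.restrict (Ioo (0:ℝ) T)) := by
      constructor
      rw [MeasureTheory.Measure.restrict_apply_univ, Real.volume_Ioo]
      exact ENNReal.ofReal_lt_top
    have hIoo : MeasureTheory.IntegrableOn (fun s => F (w s) i) (Ioo 0 T)
        MeasureTheory.volume := by
      refine ⟨((hgcont i).mono Ioo_subset_Ico_self).aestronglyMeasurable measurableSet_Ioo, ?_⟩
      apply MeasureTheory.HasFiniteIntegral.of_bounded (C := 3 * M ^ 2)
      filter_upwards [MeasureTheory.ae_restrict_mem measurableSet_Ioo] with s hs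
      exact hgbdd i s (Ioo_subset_Ico_self hs)
    rw [MeasureTheory.IntegrableOn,
      ← MeasureTheory.Measure.restrict_congr_set MeasureTheory.Ioo_ae_eq_Icc]
    exact hIoo
  have hII : ∀ (i : Fin d) (t' : ℝ), 0 ≤ t' → t' ≤ T →
      IntervalIntegrable (fun s => F (w s) i) MeasureTheory.volume 0 t' := by
    intro i t' h0 h1
    apply MeasureTheory.IntegrableOn.intervalIntegrable
    rw [uIcc_of_le h0]
    exact (hint i).mono_set (Icc_subset_Icc_right h1)
  have hinteq : ∀ (i : Fin d) (t : ℝ), 0 ≤ t → t < T →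
      w t i = w 0 i + ∫ s in (0:ℝ)..t, F (w s) i := by
    intro i t h0 h1
    have := intervalIntegral.integral_eq_sub_of_hasDeriv_right_of_le h0
      (hcont t h0 (hsub t h0 h1) i)
      (fun x hx => (hD x hx.1 (hsub x hx.1.le (hx.2.trans h1)) i).hasDerivWithinAt)
      (hII i t h0 h1.le)
    linarith [this]
  set L : Fin d → ℝ := fun i => w 0 i + ∫ s in (0:ℝ)..T, F (w s) i with hLdef
  have hprim : ∀ i : Fin d,
      ContinuousOn (fun u => w 0 i + ∫ s in (0:ℝ)..u, F (w s) i) (Icc 0 T) := by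
    intro i
    apply continuousOn_const.add
    have h1 := intervalIntegral.continuousOn_primitive_interval
      (f := fun s => F (w s) i) (μ := MeasureTheory.volume) (a := 0) (b := T)
      (by rw [uIcc_of_le hTpos.le]; exact hint i)
    rwa [uIcc_of_le hTpos.le] at h1
  have hwlim : ∀ i, Tendsto (fun s => w s i) (𝓝[Ico 0 T] T) (𝓝 (L i)) := by
    intro i
    have h1 : Tendsto (fun u => w 0 i + ∫ s in (0:ℝ)..u, F (w s) i)
        (𝓝[Icc 0 T] T) (𝓝 (L i)) := (hprim i T (right_mem_Icc.2 hTpos.le)).tendsto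
    refine Tendsto.congr' ?_ (h1.mono_left (nhdsWithin_mono _ Ico_subset_Icc_self))
    filter_upwards [self_mem_nhdsWithin] with u hu
    exact (hinteq i u hu.1 hu.2).symm
  have hwlimV : Tendsto w (𝓝[Ico 0 T] T) (𝓝 L) := tendsto_pi_nhds.2 hwlim
  have hfil : 𝓝[Iic T] T ⊓ MeasureTheory.ae MeasureTheory.volume ≤ 𝓝[Ico 0 T] T := by
    have h1 : MeasureTheory.ae MeasureTheory.volume ≤ 𝓟 ({T}ᶜ : Set ℝ) := by
      rw [le_principal_iff, MeasureTheory.mem_ae_iff, compl_compl]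
      exact Real.volume_singleton
    calc 𝓝[Iic T] T ⊓ MeasureTheory.ae MeasureTheory.volume
        ≤ 𝓝[Iic T] T ⊓ 𝓟 ({T}ᶜ : Set ℝ) := inf_le_inf_left _ h1
      _ = 𝓝[Iic T ∩ ({T}ᶜ : Set ℝ)] T := (nhdsWithin_inter' T _ _).symm
      _ = 𝓝[Iio T] T := by
          rw [show Iic T ∩ ({T}ᶜ : Set ℝ) = Iio T from by
            ext y; simp [lt_iff_le_and_ne]]
      _ = 𝓝[Ico 0 T] T := by
          rw [← Ici_inter_Iio,
            nhdsWithin_inter_of_mem (mem_nhdsWithin_of_mem_nhds (Ici_mem_nhds hTpos))]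
  have hglim : ∀ i, Tendsto (fun s => F (w s) i)
      (𝓝[Iic T] T ⊓ MeasureTheory.ae MeasureTheory.volume) (𝓝 (F L i)) :=
    fun i => (((hFci i).tendsto L).comp hwlimV).mono_left hfil
  have hmeasf : ∀ i, StronglyMeasurableAtFilter (fun s => F (w s) i) (𝓝[Iic T] T)
      MeasureTheory.volume := by
    intro i
    refine ⟨Icc 0 T, ?_, (hint i).aestronglyMeasurable⟩
    have h2 : Ici (0:ℝ) ∩ Iic T ∈ 𝓝[Iic T] T :=
      inter_mem (mem_nhdsWithin_of_mem_nhds (Ici_mem_nhds hTpos)) self_mem_nhdsWithin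
    simpa [Ici_inter_Iic] using h2
  have hleft : ∀ i, HasDerivWithinAt (fun u => w 0 i + ∫ s in (0:ℝ)..u, F (w s) i)
      (F L i) (Iic T) T := by
    intro i
    apply HasDerivWithinAt.const_add
    exact intervalIntegral.integral_hasDerivWithinAt_of_tendsto_ae_right
      (hII i T hTpos.le le_rfl) (hmeasf i) (hglim i)
  -- local solution from Picard–Lindelöf
  obtain ⟨ψ, hψ0, ε, hε, hψ⟩ :=
    ContDiffAt.exists_forall_mem_closedBall_exists_eq_forall_mem_Ioo_hasDerivAt₀
      (hFcd.contDiffAt : ContDiffAt ℝ 1 F L) T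
  set z : ℝ → Fin d → ℝ := fun t => if t < T then w t else ψ t with hzdef
  have hzT : z T = L := by simp [hzdef, lt_irrefl, hψ0]
  have hzderivT : ∀ i, HasDerivWithinAt (fun s => z s i) (F (z T) i) (Ici 0) T := by
    intro i
    rw [hzT]
    have hleft' : HasDerivWithinAt (fun s => z s i) (F L i) (Icc 0 T) T := by
      refine ((hleft i).mono Icc_subset_Iic_self).congr ?_ ?_
      · intro y hy
        rcases lt_or_eq_of_le hy.2 with h | h
        · show z y i = _
          rw [hzdef]
          simp only [if_pos h]
          exact hinteq i y hy.1 h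
        · show z y i = _
          rw [h, hzT]
      · show z T i = _
        rw [hzT]
    have hright' : HasDerivWithinAt (fun s => z s i) (F L i) (Ici T) T := by
      have hdT : HasDerivAt ψ (F (ψ T)) T := hψ T ⟨by linarith, by linarith⟩
      have hco : HasDerivAt (fun s => ψ s i) (F (ψ T) i) T := hasDerivAt_pi.1 hdT i
      rw [hψ0] at hco
      refine hco.hasDerivWithinAt.congr ?_ ?_
      · intro y hy
        show z y i = ψ y i
        rw [hzdef]; simp only [if_neg (not_lt.2 (mem_Ici.1 hy))]
      · show z T i = ψ T i
        rw [hzT, hψ0]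
    have hu := hleft'.union hright'
    have hset : Icc (0:ℝ) T ∪ Ici T = Ici 0 := by
      ext x
      simp only [mem_union, mem_Icc, mem_Ici]
      constructor
      · rintro (⟨a, _⟩ | hx)
        · exact a
        · linarith
      · intro hx
        rcases le_or_gt x T with h | h
        · exact Or.inl ⟨hx, h⟩
        · exact Or.inr h.le
    rwa [hset] at hu
  refine hmax (ENNReal.ofReal (T + ε/2)) z ?_ ?_ ?_
  · rw [hτT]
    exact (ENNReal.ofReal_lt_ofReal_iff (by linarith)).2 (by linarith)
  · intro t ht0 htτ' i
    have htlt : t < T + ε/2 := (ENNReal.ofReal_lt_ofReal_iff (by linarith)).1 htτ'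
    rcases lt_trichotomy t T with hlt | heq | hgt
    · have hzw : z t = w t := if_pos hlt
      have hev : (fun s => z s i) =ᶠ[𝓝[Ici 0] t] (fun s => w s i) := by
        filter_upwards [mem_nhdsWithin_of_mem_nhds (Iio_mem_nhds hlt)] with s hs
        have hs' : s < T := hs
        show z s i = w s i
        rw [show z s = w s from if_pos hs']
      rw [hzw]
      exact (hode t ht0 (hsub t ht0 hlt) i).congr_of_eventuallyEq hev
        (by show z t i = w t i; rw [hzw])
    · subst heq
      exact hzderivT i
    · have hdt : HasDerivAt ψ (F (ψ t)) t := hψ t ⟨by linarith, by linarith⟩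
      have hco : HasDerivAt (fun s => ψ s i) (F (ψ t) i) t := hasDerivAt_pi.1 hdt i
      have hzψ : z t = ψ t := if_neg (not_lt.2 hgt.le)
      rw [hzψ]
      have hev : (fun s => z s i) =ᶠ[𝓝 t] (fun s => ψ s i) := by
        filter_upwards [Ioi_mem_nhds hgt] with s hs
        have hs' : T < s := hs
        show z s i = ψ s i
        rw [show z s = ψ s from if_neg (not_lt.2 hs'.le)]
      exact (hco.congr_of_eventuallyEq hev).hasDerivWithinAt
  · intro t ht0 htτ
    rw [hτT] at htτ
    exact if_pos ((ENNReal.ofReal_lt_ofReal_iff hTpos).1 htτ)
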